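/- arXiv:1809.03075 — 3 statements merged into one kernel-verified Lean document; each statement's English description precedes it below -/
import Mathlib

section
/- (One-step laminar regret decomposition, the inductive step of Theorem 1.) The cumulative subtree regret of the decision point decomposes exactly into the laminar loss terms at the decision point and the cumulative regrets of its children: R^T = Σ_{t=1}^T ℓ̂^t(x^t) − min_{x̂∈X} [ Σ_{t=1}^T ℓ̂^t(x̂) − Σ_{i∈C} x̂_{c(i)} R_i^T ]. -/
open Finset

/-- One-step laminar regret decomposition (inductive step of Theorem 1):
    the cumulative subtree regret at a decision point decomposes exactly into
    the laminar loss terms at the decision point and the cumulative regrets of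
    its children. -/
theorem laminar_regret_decomposition
    {n : ℕ} (X : Set (Fin n → ℝ))
    (hXne : X.Nonempty) (hXcpt : IsCompact X)
    (hXnonneg : ∀ xh ∈ X, ∀ a : Fin n, 0 ≤ xh a)
    {C : Type*} [Fintype C] (c : C → Fin n)
    {E : C → Type*} [∀ i, NormedAddCommGroup (E i)] [∀ i, NormedSpace ℝ (E i)]
    [∀ i, FiniteDimensional ℝ (E i)]
    (K : ∀ i : C, Set (E i))
    (hKne : ∀ i, (K i).Nonempty) (hKcpt : ∀ i, IsCompact (K i))
    {T : ℕ}
    (ℓ : Fin T → (Fin n → ℝ) → ℝ) (hℓ : ∀ t, Continuous (ℓ t))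
    (V : Fin T → ∀ i : C, E i → ℝ) (hV : ∀ t i, ContinuousOn (V t i) (K i))
    (x : Fin T → (Fin n → ℝ)) (hx : ∀ t, x t ∈ X)
    (y : Fin T → ∀ i : C, E i) (hy : ∀ t i, y t i ∈ K i)
    -- the cumulative subtree regret
    (R : ℝ)
    (hR : R = (∑ t, (ℓ t (x t) + ∑ i, x t (c i) * V t i (y t i))) -
      sInf ((fun p : (Fin n → ℝ) × (∀ i : C, E i) =>
          ∑ t, (ℓ t p.1 + ∑ i, p.1 (c i) * V t i (p.2 i))) ''
        (X ×ˢ Set.univ.pi K)))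
    -- the cumulative regret of each child
    (Rc : C → ℝ)
    (hRc : ∀ i, Rc i = (∑ t, V t i (y t i)) -
      sInf ((fun yh => ∑ t, V t i yh) '' K i))
    -- the laminar loss at the decision point
    (lhat : Fin T → (Fin n → ℝ) → ℝ)
    (hlhat : ∀ t xh, lhat t xh = ℓ t xh + ∑ i, xh (c i) * V t i (y t i)) :
    R = (∑ t, lhat t (x t)) -
      sInf ((fun xh => (∑ t, lhat t xh) - ∑ i, xh (c i) * Rc i) '' X) := by
  classical
  set f : ∀ i : C, E i → ℝ := fun i z => ∑ t, V t i z with hf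
  have hfcont : ∀ i, ContinuousOn (f i) (K i) := fun i =>
    continuousOn_finset_sum _ (fun t _ => hV t i)
  have hexists : ∀ i, ∃ z ∈ K i, ∀ w ∈ K i, f i z ≤ f i w := by
    intro i
    obtain ⟨z, hz, hmin⟩ := (hKcpt i).exists_isMinOn (hKne i) (hfcont i)
    exact ⟨z, hz, fun w hw => hmin hw⟩
  choose ystar hystar hystarmin using hexists
  set m : C → ℝ := fun i => f i (ystar i) with hm
  have hsInf_child : ∀ i, sInf ((fun yh => ∑ t, V t i yh) '' K i) = m i := by
    intro i
    refine IsLeast.csInf_eq ⟨⟨ystar i, hystar i, rfl⟩, ?_⟩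
    rintro r ⟨z, hz, rfl⟩
    exact hystarmin i z hz
  set g' : (Fin n → ℝ) → ℝ := fun xh => (∑ t, ℓ t xh) + ∑ i, xh (c i) * m i with hg'
  have hg'cont : Continuous g' := by
    apply Continuous.add
    · exact continuous_finset_sum _ fun t _ => hℓ t
    · exact continuous_finset_sum _ fun i _ =>
        (continuous_apply (c i)).mul continuous_const
  obtain ⟨xstar, hxstar, hxminOn⟩ := hXcpt.exists_isMinOn hXne hg'cont.continuousOn
  have hxmin : ∀ xh ∈ X, g' xstar ≤ g' xh := fun xh hxh => hxminOn hxh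
  -- identity: the reduced objective on X equals g'
  have hgg' : ∀ xh : Fin n → ℝ,
      (∑ t, lhat t xh) - ∑ i, xh (c i) * Rc i = g' xh := by
    intro xh
    simp only [hlhat, hRc, hsInf_child, hg']
    rw [Finset.sum_add_distrib, Finset.sum_comm]
    simp only [← Finset.mul_sum]
    rw [add_sub_assoc, ← Finset.sum_sub_distrib]
    congr 1
    apply Finset.sum_congr rfl
    intro i _
    ring
  -- identity: the joint objective in terms of f
  have hFeq : ∀ p : (Fin n → ℝ) × (∀ i : C, E i),
      (∑ t, (ℓ t p.1 + ∑ i, p.1 (c i) * V t i (p.2 i)))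
        = (∑ t, ℓ t p.1) + ∑ i, p.1 (c i) * f i (p.2 i) := by
    intro p
    rw [Finset.sum_add_distrib, Finset.sum_comm]
    simp only [← Finset.mul_sum]
    rfl
  have hsInf_joint : sInf ((fun p : (Fin n → ℝ) × (∀ i : C, E i) =>
      ∑ t, (ℓ t p.1 + ∑ i, p.1 (c i) * V t i (p.2 i))) ''
        (X ×ˢ Set.univ.pi K)) = g' xstar := by
    refine IsLeast.csInf_eq ⟨⟨(xstar, ystar), ?_, ?_⟩, ?_⟩
    · exact ⟨hxstar, fun i _ => hystar i⟩
    · exact hFeq (xstar, ystar)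
    · rintro r ⟨p, ⟨hp1, hp2⟩, rfl⟩
      dsimp only
      rw [hFeq]
      refine le_trans (hxmin p.1 hp1) ?_
      apply add_le_add_right
      apply Finset.sum_le_sum
      intro i _
      exact mul_le_mul_of_nonneg_left (hystarmin i (p.2 i) (hp2 i (Set.mem_univ i)))
        (hXnonneg p.1 hp1 (c i))
  have hsInf_red : sInf ((fun xh => (∑ t, lhat t xh) - ∑ i, xh (c i) * Rc i) '' X)
      = g' xstar := by
    refine IsLeast.csInf_eq ⟨⟨xstar, hxstar, hgg' xstar⟩, ?_⟩
    rintro r ⟨xh, hxh, rfl⟩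
    dsimp only
    rw [hgg']
    exact hxmin xh hxh
  rw [hR, hsInf_joint, hsInf_red]
  congr 1
  apply Finset.sum_congr rfl
  intro t _
  rw [hlhat]
end

section
/- (One-step version of Theorem 2.) The cumulative subtree regret is bounded by the laminar regret at the decision point plus the maximum, over strategies at the decision point, of the weighted sum of the children's cumulative regrets: R^T ≤ R̂^T + max_{x̂∈X} Σ_{i∈C} x̂_{c(i)} · R_i^T. -/
open Finset

/-- One-step version of Theorem 2: the cumulative subtree regret is bounded by
    the laminar regret at the decision point plus the maximum, over strategies
    at the decision point, of the weighted sum of the children's cumulative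
    regrets. -/
theorem laminar_regret_bound
    {n : ℕ} (X : Set (Fin n → ℝ))
    (hXne : X.Nonempty) (hXcpt : IsCompact X)
    (hXnonneg : ∀ xh ∈ X, ∀ a : Fin n, 0 ≤ xh a)
    {C : Type*} [Fintype C] (c : C → Fin n)
    {E : C → Type*} [∀ i, NormedAddCommGroup (E i)] [∀ i, NormedSpace ℝ (E i)]
    [∀ i, FiniteDimensional ℝ (E i)]
    (K : ∀ i : C, Set (E i))
    (hKne : ∀ i, (K i).Nonempty) (hKcpt : ∀ i, IsCompact (K i))
    {T : ℕ}
    (ℓ : Fin T → (Fin n → ℝ) → ℝ) (hℓ : ∀ t, Continuous (ℓ t))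
    (V : Fin T → ∀ i : C, E i → ℝ) (hV : ∀ t i, ContinuousOn (V t i) (K i))
    (x : Fin T → (Fin n → ℝ)) (hx : ∀ t, x t ∈ X)
    (y : Fin T → ∀ i : C, E i) (hy : ∀ t i, y t i ∈ K i)
    -- the cumulative subtree regret
    (R : ℝ)
    (hR : R = (∑ t, (ℓ t (x t) + ∑ i, x t (c i) * V t i (y t i))) -
      sInf ((fun p : (Fin n → ℝ) × (∀ i : C, E i) =>
          ∑ t, (ℓ t p.1 + ∑ i, p.1 (c i) * V t i (p.2 i))) ''
        (X ×ˢ Set.univ.pi K)))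
    -- the cumulative regret of each child
    (Rc : C → ℝ)
    (hRc : ∀ i, Rc i = (∑ t, V t i (y t i)) -
      sInf ((fun yh => ∑ t, V t i yh) '' K i))
    -- the laminar loss at the decision point
    (lhat : Fin T → (Fin n → ℝ) → ℝ)
    (hlhat : ∀ t xh, lhat t xh = ℓ t xh + ∑ i, xh (c i) * V t i (y t i))
    -- the laminar regret at the decision point
    (Rhat : ℝ)
    (hRhat : Rhat = (∑ t, lhat t (x t)) -
      sInf ((fun xh => ∑ t, lhat t xh) '' X)) :
    R ≤ Rhat + sSup ((fun xh => ∑ i, xh (c i) * Rc i) '' X) := by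
  classical
  set F : (Fin n → ℝ) × (∀ i : C, E i) → ℝ :=
    fun p => ∑ t, (ℓ t p.1 + ∑ i, p.1 (c i) * V t i (p.2 i)) with hF
  set S : Set ((Fin n → ℝ) × (∀ i : C, E i)) := X ×ˢ Set.univ.pi K with hS
  have hScpt : IsCompact S := hXcpt.prod (isCompact_univ_pi hKcpt)
  have hSne : S.Nonempty :=
    hXne.prod ⟨fun i => (hKne i).some, fun i _ => (hKne i).some_mem⟩
  have hFcont : ContinuousOn F S := by
    apply continuousOn_finset_sum
    intro t _
    apply ContinuousOn.add
    · exact ((hℓ t).comp continuous_fst).continuousOn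
    · apply continuousOn_finset_sum
      intro i _
      apply ContinuousOn.mul
      · exact ((continuous_apply (c i)).comp continuous_fst).continuousOn
      · exact (hV t i).comp ((continuous_apply i).comp continuous_snd).continuousOn
          (fun p hp => hp.2 i (Set.mem_univ i))
  obtain ⟨p, hpS, hpmin⟩ := hScpt.exists_isMinOn hSne hFcont
  have hinfF : sInf (F '' S) = F p := by
    apply le_antisymm
    · exact csInf_le ⟨F p, fun z ⟨q, hq, hzq⟩ => hzq ▸ hpmin hq⟩ ⟨p, hpS, rfl⟩
    · exact le_csInf (hSne.image F) (fun z ⟨q, hq, hzq⟩ => hzq ▸ hpmin hq)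
  have hpX : p.1 ∈ X := hpS.1
  have hpK : ∀ i, p.2 i ∈ K i := fun i => hpS.2 i (Set.mem_univ i)
  -- each child's cumulative regret bound at p.2 i
  have hchild : ∀ i, ∑ t, V t i (y t i) ≤ Rc i + ∑ t, V t i (p.2 i) := by
    intro i
    have hbdd : BddBelow ((fun yh => ∑ t, V t i yh) '' K i) :=
      ((hKcpt i).image_of_continuousOn
        (continuousOn_finset_sum _ (fun t _ => hV t i))).bddBelow
    have hle : sInf ((fun yh => ∑ t, V t i yh) '' K i) ≤ ∑ t, V t i (p.2 i) :=
      csInf_le hbdd ⟨p.2 i, hpK i, rfl⟩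
    rw [hRc i]; linarith
  -- laminar loss sum at p.1 is bounded by F p + weighted child regrets
  have hswap : ∑ t, lhat t p.1 =
      (∑ t, ℓ t p.1) + ∑ i, p.1 (c i) * ∑ t, V t i (y t i) := by
    simp only [hlhat, Finset.sum_add_distrib]
    rw [Finset.sum_comm]
    simp [Finset.mul_sum]
  have hFp : F p = (∑ t, ℓ t p.1) + ∑ i, p.1 (c i) * ∑ t, V t i (p.2 i) := by
    simp only [hF, Finset.sum_add_distrib]
    rw [Finset.sum_comm]
    simp [Finset.mul_sum]
  have hkey : ∑ t, lhat t p.1 ≤ F p + ∑ i, p.1 (c i) * Rc i := by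
    rw [hswap, hFp]
    have : ∑ i, p.1 (c i) * ∑ t, V t i (y t i) ≤
        ∑ i, (p.1 (c i) * ∑ t, V t i (p.2 i) + p.1 (c i) * Rc i) := by
      apply Finset.sum_le_sum
      intro i _
      have := hchild i
      nlinarith [hXnonneg p.1 hpX (c i)]
    rw [Finset.sum_add_distrib] at this
    linarith
  -- bounds via sInf/sSup on X
  have hLeq : (fun xh => ∑ t, lhat t xh) =
      fun xh => ∑ t, (ℓ t xh + ∑ i, xh (c i) * V t i (y t i)) := by
    funext xh; simp [hlhat]
  have hLcont : ContinuousOn (fun xh => ∑ t, lhat t xh) X := by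
    rw [hLeq]
    exact (continuous_finset_sum _ (fun t _ => (hℓ t).add
      (continuous_finset_sum _ (fun i _ =>
        (continuous_apply (c i)).mul continuous_const)))).continuousOn
  have hA : sInf ((fun xh => ∑ t, lhat t xh) '' X) ≤ ∑ t, lhat t p.1 :=
    csInf_le (hXcpt.image_of_continuousOn hLcont).bddBelow ⟨p.1, hpX, rfl⟩
  have hB : ∑ i, p.1 (c i) * Rc i ≤
      sSup ((fun xh => ∑ i, xh (c i) * Rc i) '' X) :=
    le_csSup (hXcpt.image_of_continuousOn
      (continuous_finset_sum _ (fun i _ =>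
        (continuous_apply (c i)).mul continuous_const)).continuousOn).bddAbove
      ⟨p.1, hpX, rfl⟩
  rw [hR, hRhat]
  have hP : ∑ t, (ℓ t (x t) + ∑ i, x t (c i) * V t i (y t i)) =
      ∑ t, lhat t (x t) := by simp [hlhat]
  rw [hP]
  linarith
end

section
/- (Two-level version of the Corollary to Theorem 2.) If the laminar regret at the decision point grows sublinearly, i.e., R̂^T / T → 0 as T → ∞, and for every child i ∈ C the cumulative child regret grows sublinearly, i.e., R_i^T / T → 0 as T → ∞, then the cumulative subtree regret grows sublinearly: R^T / T → 0 as T → ∞. -/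
open Finset Filter

/-- Two-level version of the Corollary to Theorem 2: if the laminar regret at
    the decision point and the cumulative regrets of all children grow
    sublinearly, then the cumulative subtree regret grows sublinearly. -/
theorem laminar_regret_sublinear
    {n : ℕ} (X : Set (Fin n → ℝ))
    (hXne : X.Nonempty) (hXcpt : IsCompact X)
    (hXnonneg : ∀ xh ∈ X, ∀ a : Fin n, 0 ≤ xh a)
    {C : Type*} [Fintype C] (c : C → Fin n)
    {E : C → Type*} [∀ i, NormedAddCommGroup (E i)] [∀ i, NormedSpace ℝ (E i)]
    [∀ i, FiniteDimensional ℝ (E i)]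
    (K : ∀ i : C, Set (E i))
    (hKne : ∀ i, (K i).Nonempty) (hKcpt : ∀ i, IsCompact (K i))
    (ℓ : ℕ → (Fin n → ℝ) → ℝ) (hℓ : ∀ t, Continuous (ℓ t))
    (V : ℕ → ∀ i : C, E i → ℝ) (hV : ∀ t i, ContinuousOn (V t i) (K i))
    (x : ℕ → (Fin n → ℝ)) (hx : ∀ t, x t ∈ X)
    (y : ℕ → ∀ i : C, E i) (hy : ∀ t i, y t i ∈ K i)
    -- the cumulative subtree regret up to time `T`
    (R : ℕ → ℝ)
    (hR : ∀ T, R T =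
      (∑ t ∈ range T, (ℓ t (x t) + ∑ i, x t (c i) * V t i (y t i))) -
      sInf ((fun p : (Fin n → ℝ) × (∀ i : C, E i) =>
          ∑ t ∈ range T, (ℓ t p.1 + ∑ i, p.1 (c i) * V t i (p.2 i))) ''
        (X ×ˢ Set.univ.pi K)))
    -- the cumulative regret of each child up to time `T`
    (Rc : C → ℕ → ℝ)
    (hRc : ∀ i T, Rc i T = (∑ t ∈ range T, V t i (y t i)) -
      sInf ((fun yh => ∑ t ∈ range T, V t i yh) '' K i))
    -- the laminar loss at the decision point
    (lhat : ℕ → (Fin n → ℝ) → ℝ)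
    (hlhat : ∀ t xh, lhat t xh = ℓ t xh + ∑ i, xh (c i) * V t i (y t i))
    -- the laminar regret at the decision point up to time `T`
    (Rhat : ℕ → ℝ)
    (hRhat : ∀ T, Rhat T = (∑ t ∈ range T, lhat t (x t)) -
      sInf ((fun xh => ∑ t ∈ range T, lhat t xh) '' X))
    -- sublinear growth of the laminar regret and of the children's regrets
    (hRhat_sub : Tendsto (fun T : ℕ => Rhat T / T) atTop (nhds 0))
    (hRc_sub : ∀ i, Tendsto (fun T : ℕ => Rc i T / T) atTop (nhds 0)) :
    Tendsto (fun T : ℕ => R T / T) atTop (nhds 0) := by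

  classical
  -- bound on coordinates of points of X
  obtain ⟨M, hM⟩ := hXcpt.exists_bound_of_continuousOn continuousOn_id
  have hM0 : 0 ≤ M := by
    obtain ⟨x0, hx0⟩ := hXne
    exact le_trans (norm_nonneg _) (hM x0 hx0)
  have hMx : ∀ xh ∈ X, ∀ a, xh a ≤ M := by
    intro xh hxh a
    calc xh a ≤ |xh a| := le_abs_self _
    _ = ‖xh a‖ := rfl
    _ ≤ ‖xh‖ := norm_le_pi_norm xh a
    _ ≤ M := hM xh hxh
  -- key bound : |R T - Rhat T| ≤ M * ∑ i, |Rc i T|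
  have key : ∀ T : ℕ, |R T - Rhat T| ≤ M * ∑ i, |Rc i T| := by
    intro T
    set s : C → ℝ := fun i => ∑ t ∈ range T, V t i (y t i) with hs
    set m : C → ℝ := fun i => sInf ((fun yh => ∑ t ∈ range T, V t i yh) '' K i) with hm
    have hVsum : ∀ i, ContinuousOn (fun yh => ∑ t ∈ range T, V t i yh) (K i) := by
      intro i
      exact continuousOn_finset_sum _ (fun t _ => hV t i)
    have himgbdd : ∀ i, BddBelow ((fun yh => ∑ t ∈ range T, V t i yh) '' K i) := by
      intro i
      exact ((hKcpt i).image_of_continuousOn (hVsum i)).bddBelow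
    -- minimizers for each child
    have hmin : ∀ i, ∃ z ∈ K i, (∑ t ∈ range T, V t i z) = m i := by
      intro i
      obtain ⟨z, hz, hzmin⟩ := (hKcpt i).exists_isMinOn (hKne i) (hVsum i)
      refine ⟨z, hz, le_antisymm ?_ (csInf_le (himgbdd i) ⟨z, hz, rfl⟩)⟩
      refine le_csInf ((hKne i).image _) ?_
      rintro b ⟨w, hw, rfl⟩
      exact hzmin hw
    choose ystar hystar hystarval using hmin
    have hmle : ∀ i, ∀ z ∈ K i, m i ≤ ∑ t ∈ range T, V t i z := by
      intro i z hz
      exact csInf_le (himgbdd i) ⟨z, hz, rfl⟩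
    have hRci : ∀ i, Rc i T = s i - m i := fun i => hRc i T
    -- the two objective functions
    set g : (Fin n → ℝ) × (∀ i : C, E i) → ℝ := fun p =>
      ∑ t ∈ range T, (ℓ t p.1 + ∑ i, p.1 (c i) * V t i (p.2 i)) with hg
    set h : (Fin n → ℝ) → ℝ := fun xh => ∑ t ∈ range T, lhat t xh with hh
    have hhval : ∀ xh, h xh = (∑ t ∈ range T, ℓ t xh) + ∑ i, xh (c i) * s i := by
      intro xh
      simp only [hh, hlhat, Finset.sum_add_distrib]
      congr 1
      rw [Finset.sum_comm]
      exact Finset.sum_congr rfl fun i _ => (Finset.mul_sum _ _ _).symm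
    have hgval : ∀ p : (Fin n → ℝ) × (∀ i : C, E i),
        g p = (∑ t ∈ range T, ℓ t p.1) + ∑ i, p.1 (c i) * ∑ t ∈ range T, V t i (p.2 i) := by
      intro p
      simp only [hg, Finset.sum_add_distrib]
      congr 1
      rw [Finset.sum_comm]
      exact Finset.sum_congr rfl fun i _ => (Finset.mul_sum _ _ _).symm
    -- the constraint sets
    set P : Set ((Fin n → ℝ) × (∀ i : C, E i)) := X ×ˢ Set.univ.pi K with hP
    have hPcpt : IsCompact P := hXcpt.prod (isCompact_univ_pi hKcpt)
    have hPne : P.Nonempty := hXne.prod (Set.univ_pi_nonempty_iff.mpr hKne)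
    have hgcont : ContinuousOn g P := by
      have : ∀ p ∈ P, g p = (∑ t ∈ range T, ℓ t p.1) +
          ∑ i, p.1 (c i) * ∑ t ∈ range T, V t i (p.2 i) := fun p _ => hgval p
      refine ContinuousOn.congr ?_ this
      refine ContinuousOn.add ?_ ?_
      · exact ((continuous_finset_sum _ (fun t _ => hℓ t)).comp continuous_fst).continuousOn
      · refine continuousOn_finset_sum _ (fun i _ => ContinuousOn.mul ?_ ?_)
        · exact ((continuous_apply (c i)).comp continuous_fst).continuousOn
        · refine continuousOn_finset_sum _ (fun t _ => ?_)
          refine (hV t i).comp ((continuous_apply i).comp continuous_snd).continuousOn ?_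
          rintro ⟨xh, yh⟩ ⟨-, hyh⟩
          exact hyh i trivial
    have hS1bdd : BddBelow (g '' P) := (hPcpt.image_of_continuousOn hgcont).bddBelow
    have hS1ne : (g '' P).Nonempty := hPne.image g
    have hhcont : Continuous h := by
      have : h = fun xh => (∑ t ∈ range T, ℓ t xh) + ∑ i, xh (c i) * s i := funext hhval
      rw [this]
      exact (continuous_finset_sum _ (fun t _ => hℓ t)).add
        (continuous_finset_sum _ (fun i _ => (continuous_apply (c i)).mul continuous_const))
    have hS2bdd : BddBelow (h '' X) := (hXcpt.image_of_continuousOn hhcont.continuousOn).bddBelow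
    have hS2ne : (h '' X).Nonempty := hXne.image h
    set D : ℝ := M * ∑ i, |Rc i T| with hD
    have hDsum : D = ∑ i, M * |Rc i T| := Finset.mul_sum _ _ _
    have hbound : ∀ xh ∈ X, |∑ i, xh (c i) * Rc i T| ≤ D := by
      intro xh hxh
      rw [hDsum]
      calc |∑ i, xh (c i) * Rc i T| ≤ ∑ i, |xh (c i) * Rc i T| :=
            Finset.abs_sum_le_sum_abs _ _
        _ ≤ ∑ i, M * |Rc i T| := by
            refine Finset.sum_le_sum fun i _ => ?_
            rw [abs_mul, abs_of_nonneg (hXnonneg xh hxh (c i))]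
            exact mul_le_mul_of_nonneg_right (hMx xh hxh (c i)) (abs_nonneg _)
    -- inequality (b): sInf (h '' X) - D ≤ sInf (g '' P)
    have hb : sInf (h '' X) - D ≤ sInf (g '' P) := by
      refine le_csInf hS1ne ?_
      rintro b ⟨⟨xh, yh⟩, ⟨hxX, hyK⟩, rfl⟩
      have h1 : ∀ i, xh (c i) * (∑ t ∈ range T, V t i (yh i)) ≥ xh (c i) * m i := by
        intro i
        exact mul_le_mul_of_nonneg_left (hmle i (yh i) (hyK i trivial)) (hXnonneg xh hxX (c i))
      have h2 : h xh - ∑ i, xh (c i) * Rc i T ≤ g (xh, yh) := by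
        rw [hgval, hhval]
        have : ∀ i, xh (c i) * s i - xh (c i) * Rc i T ≤
            xh (c i) * ∑ t ∈ range T, V t i (yh i) := by
          intro i
          rw [hRci i]
          have : xh (c i) * s i - xh (c i) * (s i - m i) = xh (c i) * m i := by ring
          rw [this]
          exact h1 i
        calc (∑ t ∈ range T, ℓ t xh) + ∑ i, xh (c i) * s i - ∑ i, xh (c i) * Rc i T
            = (∑ t ∈ range T, ℓ t xh) + ∑ i, (xh (c i) * s i - xh (c i) * Rc i T) := by
              rw [Finset.sum_sub_distrib]; ring
          _ ≤ (∑ t ∈ range T, ℓ t xh) + ∑ i, xh (c i) * ∑ t ∈ range T, V t i (yh i) := by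
              exact add_le_add le_rfl (Finset.sum_le_sum fun i _ => this i)
      have h3 : sInf (h '' X) - D ≤ h xh - ∑ i, xh (c i) * Rc i T := by
        have hle : h xh - ∑ i, xh (c i) * Rc i T ≥ h xh - D := by
          have := (abs_le.mp (hbound xh hxX)).2
          linarith
        have : sInf (h '' X) ≤ h xh := csInf_le hS2bdd ⟨xh, hxX, rfl⟩
        linarith
      linarith
    -- inequality (a): sInf (g '' P) ≤ sInf (h '' X) + D
    have ha : sInf (g '' P) - D ≤ sInf (h '' X) := by
      refine le_csInf hS2ne ?_
      rintro b ⟨xh, hxX, rfl⟩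
      have hmem : (xh, ystar) ∈ P := ⟨hxX, fun i _ => hystar i⟩
      have h1 : sInf (g '' P) ≤ g (xh, ystar) := csInf_le hS1bdd ⟨(xh, ystar), hmem, rfl⟩
      have h2 : g (xh, ystar) = h xh - ∑ i, xh (c i) * Rc i T := by
        rw [hgval, hhval]
        dsimp only
        have e : ∀ i ∈ Finset.univ, xh (c i) * ∑ t ∈ range T, V t i (ystar i) =
            xh (c i) * s i - xh (c i) * Rc i T := by
          intro i _
          rw [hystarval i, hRci i]; ring
        rw [Finset.sum_congr rfl e, Finset.sum_sub_distrib]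
        ring
      have h3 := (abs_le.mp (hbound xh hxX)).1
      linarith
    -- conclude
    rw [hR, hRhat]
    have hdiff : (∑ t ∈ range T, (ℓ t (x t) + ∑ i, x t (c i) * V t i (y t i)))
        = ∑ t ∈ range T, lhat t (x t) := by
      exact Finset.sum_congr rfl fun t _ => (hlhat t (x t)).symm
    rw [hdiff]
    rw [abs_le]
    constructor <;> simp only [hg, hh, hP] at ha hb <;> [linarith; linarith]
  -- now the limit argument
  have hD_tendsto : Tendsto (fun T : ℕ => (M * ∑ i, |Rc i T|) / T) atTop (nhds 0) := by
    have h1 : ∀ i : C, Tendsto (fun T : ℕ => |Rc i T| / T) atTop (nhds 0) := by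
      intro i
      have := (hRc_sub i).abs
      rw [abs_zero] at this
      refine this.congr (fun T => ?_)
      rw [abs_div, Nat.abs_cast]
    have h2 : Tendsto (fun T : ℕ => ∑ i, |Rc i T| / T) atTop (nhds 0) := by
      have := tendsto_finset_sum (Finset.univ : Finset C) (fun i _ => h1 i)
      simpa using this
    have h3 := h2.const_mul M
    rw [mul_zero] at h3
    refine h3.congr (fun T => ?_)
    rw [← Finset.sum_div, mul_div_assoc]
  have hdiff_tendsto : Tendsto (fun T : ℕ => (R T - Rhat T) / T) atTop (nhds 0) := by
    refine squeeze_zero_norm (fun T => ?_) hD_tendsto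
    rw [Real.norm_eq_abs, abs_div, Nat.abs_cast]
    exact div_le_div_of_nonneg_right (key T) (Nat.cast_nonneg T)
  have := hRhat_sub.add hdiff_tendsto
  rw [add_zero] at this
  refine this.congr (fun T => ?_)
  rw [← add_div]
  ring_nf
end
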